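/- The function W : (ℂ∖{0})² → ℂ defined by W(y_1, y_2) = 3y_1 + y_2 + 2·y_1^{−1}y_2 + y_1^{−1} + y_2^{−1} + 4·y_1 y_2^{−1} + y_1^{2} y_2^{−1} has exactly 7 critical points, and each of these critical points is nondegenerate. -/

import Mathlib

open Polynomial

set_option maxHeartbeats 1000000

/-- The potential function of the monotone fiber `L(1.5,2)` in `X̂₇` with the chosen bulk deformation (energy factor dropped). -/
noncomputable def W : ℂ → ℂ → ℂ := fun y₁ y₂ =>
  3 * y₁ + y₂ + 2 * y₁⁻¹ * y₂ + y₁⁻¹ + y₂⁻¹ + 4 * y₁ * y₂⁻¹ + y₁ ^ 2 * y₂⁻¹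

/-- A point of `(ℂ∖{0})²` is a critical point of `W` if both partial
derivatives of `W` vanish there. -/
def IsCritPt (p : ℂ × ℂ) : Prop :=
  p.1 ≠ 0 ∧ p.2 ≠ 0 ∧
    deriv (fun z => W z p.2) p.1 = 0 ∧ deriv (fun z => W p.1 z) p.2 = 0

/-- The Hessian determinant
`(∂²W/∂y₁²)(∂²W/∂y₂²) - (∂²W/∂y₁∂y₂)²` of `W` at a point. -/
noncomputable def hessDet (p : ℂ × ℂ) : ℂ :=
  deriv (deriv (fun z => W z p.2)) p.1 * deriv (deriv (fun z => W p.1 z)) p.2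
    - (deriv (fun w => deriv (fun z => W z w) p.1) p.2) ^ 2

lemma hasDerivAt_W_fst (w : ℂ) {x : ℂ} (hx : x ≠ 0) :
    HasDerivAt (fun z => W z w) (3 - 2*w*(x^2)⁻¹ - (x^2)⁻¹ + 4*w⁻¹ + 2*x*w⁻¹) x := by
  have h1 : HasDerivAt (fun z : ℂ => z⁻¹) (-(x^2)⁻¹) x := hasDerivAt_inv hx
  have h2 : HasDerivAt (fun z : ℂ => z) 1 x := hasDerivAt_id x
  have h3 : HasDerivAt (fun z : ℂ => z^2) (2*x) x := by
    simpa using hasDerivAt_pow 2 x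
  have h := ((((((h2.const_mul 3).add (hasDerivAt_const x w)).add
      ((h1.const_mul 2).mul_const w)).add h1).add (hasDerivAt_const x w⁻¹)).add
      ((h2.const_mul 4).mul_const w⁻¹)).add (h3.mul_const w⁻¹)
  refine h.congr_deriv ?_
  ring

lemma hasDerivAt_W_snd (v : ℂ) {x : ℂ} (hx : x ≠ 0) :
    HasDerivAt (fun z => W v z) (1 + 2*v⁻¹ - (x^2)⁻¹ - 4*v*(x^2)⁻¹ - v^2*(x^2)⁻¹) x := by
  have h1 : HasDerivAt (fun z : ℂ => z⁻¹) (-(x^2)⁻¹) x := hasDerivAt_inv hx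
  have h2 : HasDerivAt (fun z : ℂ => z) 1 x := hasDerivAt_id x
  have h := ((((((hasDerivAt_const x (3*v)).add h2).add
      (h2.const_mul (2*v⁻¹))).add (hasDerivAt_const x v⁻¹)).add h1).add
      (h1.const_mul (4*v))).add (h1.const_mul (v^2))
  refine h.congr_deriv ?_
  ring

lemma deriv_W_fst (w : ℂ) {x : ℂ} (hx : x ≠ 0) :
    deriv (fun z => W z w) x = 3 - 2*w*(x^2)⁻¹ - (x^2)⁻¹ + 4*w⁻¹ + 2*x*w⁻¹ :=
  (hasDerivAt_W_fst w hx).deriv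

lemma deriv_W_snd (v : ℂ) {x : ℂ} (hx : x ≠ 0) :
    deriv (fun z => W v z) x = 1 + 2*v⁻¹ - (x^2)⁻¹ - 4*v*(x^2)⁻¹ - v^2*(x^2)⁻¹ :=
  (hasDerivAt_W_snd v hx).deriv

lemma deriv2_W_fst (w : ℂ) {x : ℂ} (hx : x ≠ 0) :
    deriv (deriv (fun z => W z w)) x = (4*w+2)*(x^3)⁻¹ + 2*w⁻¹ := by
  have hev : deriv (fun z => W z w) =ᶠ[nhds x]
      fun z => 3 - 2*w*(z^2)⁻¹ - (z^2)⁻¹ + 4*w⁻¹ + 2*z*w⁻¹ := by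
    filter_upwards [eventually_ne_nhds hx] with z hz using deriv_W_fst w hz
  rw [hev.deriv_eq]
  have h2 : HasDerivAt (fun z : ℂ => z) 1 x := hasDerivAt_id x
  have h3 : HasDerivAt (fun z : ℂ => z^2) (2*x) x := by simpa using hasDerivAt_pow 2 x
  have hi : HasDerivAt (fun z : ℂ => (z^2)⁻¹) (-(2*x) / (x^2)^2) x :=
    h3.inv (pow_ne_zero 2 hx)
  have h := (((((hasDerivAt_const x (3:ℂ)).sub (hi.const_mul (2*w))).sub hi).add
      (hasDerivAt_const x (4*w⁻¹))).add ((h2.const_mul 2).mul_const w⁻¹)).deriv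
  rw [show (fun z : ℂ => 3 - 2*w*(z^2)⁻¹ - (z^2)⁻¹ + 4*w⁻¹ + 2*z*w⁻¹)
      = fun z : ℂ => 3 - 2*w*(z^2)⁻¹ - (z^2)⁻¹ + 4*w⁻¹ + 2*z*w⁻¹ from rfl]
  erw [h]
  field_simp
  ring

lemma deriv2_W_snd (v : ℂ) {x : ℂ} (hx : x ≠ 0) :
    deriv (deriv (fun z => W v z)) x = (2 + 8*v + 2*v^2)*(x^3)⁻¹ := by
  have hev : deriv (fun z => W v z) =ᶠ[nhds x]
      fun z => 1 + 2*v⁻¹ - (z^2)⁻¹ - 4*v*(z^2)⁻¹ - v^2*(z^2)⁻¹ := by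
    filter_upwards [eventually_ne_nhds hx] with z hz using deriv_W_snd v hz
  rw [hev.deriv_eq]
  have h3 : HasDerivAt (fun z : ℂ => z^2) (2*x) x := by simpa using hasDerivAt_pow 2 x
  have hi : HasDerivAt (fun z : ℂ => (z^2)⁻¹) (-(2*x) / (x^2)^2) x :=
    h3.inv (pow_ne_zero 2 hx)
  have h := ((((hasDerivAt_const x (1 + 2*v⁻¹)).sub hi).sub
      (hi.const_mul (4*v))).sub (hi.const_mul (v^2))).deriv
  rw [show (fun z : ℂ => 1 + 2*v⁻¹ - (z^2)⁻¹ - 4*v*(z^2)⁻¹ - v^2*(z^2)⁻¹)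
      = fun z : ℂ => (1 + 2*v⁻¹) - (z^2)⁻¹ - 4*v*(z^2)⁻¹ - v^2*(z^2)⁻¹ from by
        funext z; ring]
  erw [h]
  field_simp
  ring

lemma deriv_mixed (x : ℂ) (hx : x ≠ 0) {y : ℂ} (hy : y ≠ 0) :
    deriv (fun w => deriv (fun z => W z w) x) y = -2*(x^2)⁻¹ - (4+2*x)*(y^2)⁻¹ := by
  have hfun : (fun w => deriv (fun z => W z w) x)
      = fun w => 3 - 2*w*(x^2)⁻¹ - (x^2)⁻¹ + 4*w⁻¹ + 2*x*w⁻¹ :=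
    funext fun w => deriv_W_fst w hx
  rw [hfun]
  have h1 : HasDerivAt (fun z : ℂ => z⁻¹) (-(y^2)⁻¹) y := hasDerivAt_inv hy
  have h2 : HasDerivAt (fun z : ℂ => z) 1 y := hasDerivAt_id y
  have h := (((((hasDerivAt_const y (3:ℂ)).sub
      ((h2.const_mul 2).mul_const ((x^2)⁻¹))).sub (hasDerivAt_const y ((x^2)⁻¹))).add
      (h1.const_mul 4)).add (h1.const_mul (2*x))).deriv
  rw [show (fun w : ℂ => 3 - 2*w*(x^2)⁻¹ - (x^2)⁻¹ + 4*w⁻¹ + 2*x*w⁻¹)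
      = fun w : ℂ => 3 - (2*w)*(x^2)⁻¹ - (x^2)⁻¹ + 4*w⁻¹ + 2*x*w⁻¹ from rfl]
  erw [h]
  ring


noncomputable def fy (x : ℂ) : ℂ := (-2*x^4 - 6*x^3 + 2*x) / ((x+2)*(3*x^2-1))

noncomputable def Pval (x : ℂ) : ℂ :=
  5*x^7 + 30*x^6 + 39*x^5 - 10*x^4 - 29*x^3 - 6*x^2 + 5*x + 2

lemma Pval_ne_zero {a : ℂ} (ha : Pval a = 0) : a ≠ 0 := by
  intro h
  rw [h] at ha
  norm_num [Pval] at ha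

lemma Pval_x2 {a : ℂ} (ha : Pval a = 0) : a + 2 ≠ 0 := by
  have ha' : 5*a^7 + 30*a^6 + 39*a^5 - 10*a^4 - 29*a^3 - 6*a^2 + 5*a + 2 = 0 := ha
  intro h
  have h72 : (72 : ℂ) = 0 := by
    linear_combination ha' + (((35) + (-20)*a + (13)*a^2 + (8)*a^3 + (1)*a^4 + (-20)*a^5 + (-5)*a^6))*h
  norm_num at h72

lemma Pval_31 {a : ℂ} (ha : Pval a = 0) : 3*a^2 - 1 ≠ 0 := by
  have ha' : 5*a^7 + 30*a^6 + 39*a^5 - 10*a^4 - 29*a^3 - 6*a^2 + 5*a + 2 = 0 := ha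
  intro h
  have h4 : (-4 : ℂ) = 0 := by
    linear_combination (((81)*a))*ha' + (((4) + (162)*a + (417)*a^2 + (-1098)*a^4 + (-810)*a^5 + (-135)*a^6))*h
  norm_num at h4

lemma Pval_cub {a : ℂ} (ha : Pval a = 0) : a^3 + 3*a^2 - 1 ≠ 0 := by
  have ha' : 5*a^7 + 30*a^6 + 39*a^5 - 10*a^4 - 29*a^3 - 6*a^2 + 5*a + 2 = 0 := ha
  intro h
  have hc : (-1217307 : ℂ) = 0 := by
    linear_combination (((2840383) + (-14201915)*a + (-5274997)*a^2))*ha' + (((6898073) + (-14201915)*a + (-77907648)*a^2 + (-59242274)*a^3 + (167176828)*a^4 + (150134530)*a^5 + (26374985)*a^6))*h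
  norm_num at hc

lemma Pval_D {a : ℂ} (ha : Pval a = 0) : (a+2)*(3*a^2-1) ≠ 0 :=
  mul_ne_zero (Pval_x2 ha) (Pval_31 ha)

lemma fy_mul {a : ℂ} (ha : Pval a = 0) :
    (a+2)*(3*a^2-1)*(fy a) = -2*a^4 - 6*a^3 + 2*a := by
  rw [fy, mul_div_cancel₀ _ (Pval_D ha)]

lemma fy_ne_zero {a : ℂ} (ha : Pval a = 0) : fy a ≠ 0 := by
  rw [fy]
  apply div_ne_zero _ (Pval_D ha)
  intro h
  have h' : (-2*a) * (a^3 + 3*a^2 - 1) = 0 := by linear_combination h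
  rcases mul_eq_zero.mp h' with h'' | h''
  · rcases mul_eq_zero.mp h'' with h3 | h3
    · norm_num at h3
    · exact Pval_ne_zero ha h3
  · exact Pval_cub ha h''

lemma crit_eqs {x y : ℂ} (h : IsCritPt (x, y)) :
    x ≠ 0 ∧ y ≠ 0 ∧ (3*x^2*y - 2*y^2 - y + 4*x^2 + 2*x^3 = 0) ∧
      (x*y^2 + 2*y^2 - x - 4*x^2 - x^3 = 0) := by
  obtain ⟨hx, hy, hd1, hd2⟩ := h
  have hx' : x ≠ 0 := hx
  have hy' : y ≠ 0 := hy
  have h1 : deriv (fun z => W z y) x = 0 := hd1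
  have h2 : deriv (fun z => W x z) y = 0 := hd2
  rw [deriv_W_fst y hx'] at h1
  rw [deriv_W_snd x hy'] at h2
  field_simp at h1 h2
  refine ⟨hx', hy', ?_, ?_⟩
  · have ye1 : y*(3*x^2*y - 2*y^2 - y + 4*x^2 + 2*x^3) = 0 := by linear_combination y*h1
    exact (mul_eq_zero.mp ye1).resolve_left hy'
  · have ye2 : y^4*(x*y^2 + 2*y^2 - x - 4*x^2 - x^3) = 0 := by linear_combination y^4*h2
    exact (mul_eq_zero.mp ye2).resolve_left (pow_ne_zero 4 hy')

lemma crit_forward {x y : ℂ} (h : IsCritPt (x, y)) : Pval x = 0 ∧ y = fy x := by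
  obtain ⟨hx, hy, e1, e2⟩ := crit_eqs h
  have hx2 : x + 2 ≠ 0 := by
    intro hh
    have h6 : (6 : ℂ) = 0 := by
      linear_combination (-1)*e2 + (((3) + (-2)*x + (-1)*x^2) + ((1))*y^2)*hh
    norm_num at h6
  have hP0 : x*(x+2)*(5*x^7 + 30*x^6 + 39*x^5 - 10*x^4 - 29*x^3 - 6*x^2 + 5*x + 2) = 0 := by
    linear_combination ((x+2)^2*((x+2)*(3*x^2-1)*y + (-2*x^4-6*x^3+2*x)))*e1
      + (2*(x+2)*((x+2)*(3*x^2-1)*y + (-2*x^4-6*x^3+2*x)) - ((x+2)*(3*x^2-1))^2)*e2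
  have hP : Pval x = 0 := by
    rcases mul_eq_zero.mp hP0 with h' | h'
    · exact absurd h' (mul_ne_zero hx hx2)
    · exact h'
  refine ⟨hP, ?_⟩
  have l : (x+2)*(3*x^2-1)*y + 2*x^4 + 6*x^3 - 2*x = 0 := by
    linear_combination (x+2)*e1 + 2*e2
  rw [fy, eq_comm, div_eq_iff (Pval_D hP)]
  linear_combination (-1)*l

lemma crit_backward {a : ℂ} (ha : Pval a = 0) : IsCritPt (a, fy a) := by
  have ha0 : a ≠ 0 := Pval_ne_zero ha
  have hb : fy a ≠ 0 := fy_ne_zero ha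
  have lb := fy_mul ha
  have ha' : 5*a^7 + 30*a^6 + 39*a^5 - 10*a^4 - 29*a^3 - 6*a^2 + 5*a + 2 = 0 := ha
  set b := fy a with hbdef
  have e1 : 3*a^2*b - 2*b^2 - b + 4*a^2 + 2*a^3 = 0 := by
    have key : ((a+2)*(3*a^2-1))^2 * (3*a^2*b - 2*b^2 - b + 4*a^2 + 2*a^3) = 0 := by
      linear_combination (2*a)*ha' + ((3*a^2-1)*((a+2)*(3*a^2-1))
        - 2*((a+2)*(3*a^2-1)*b + (-2*a^4-6*a^3+2*a)))*lb
    exact (mul_eq_zero.mp key).resolve_left (pow_ne_zero 2 (Pval_D ha))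
  have e2 : a*b^2 + 2*b^2 - a - 4*a^2 - a^3 = 0 := by
    have key : ((a+2)*(3*a^2-1))^2 * (a*b^2 + 2*b^2 - a - 4*a^2 - a^3) = 0 := by
      linear_combination (-(a*(a+2)))*ha' + ((a+2)*((a+2)*(3*a^2-1)*b + (-2*a^4-6*a^3+2*a)))*lb
    exact (mul_eq_zero.mp key).resolve_left (pow_ne_zero 2 (Pval_D ha))
  refine ⟨ha0, hb, ?_, ?_⟩
  · show deriv (fun z => W z b) a = 0
    rw [deriv_W_fst b ha0]
    field_simp
    linear_combination e1
  · show deriv (fun z => W a z) b = 0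
    rw [deriv_W_snd a hb]
    field_simp
    linear_combination e2

lemma hessDet_eq {x y : ℂ} (hx : x ≠ 0) (hy : y ≠ 0) :
    hessDet (x, y) =
      (-12*x^4 + (4*x+16*x^2+4*x^3)*y + (8*x+16*x^2)*y^2 - 4*y^4) / (x^4*y^4) := by
  show deriv (deriv (fun z => W z y)) x * deriv (deriv (fun z => W x z)) y
      - (deriv (fun w => deriv (fun z => W z w) x) y) ^ 2 = _
  rw [deriv2_W_fst y hx, deriv2_W_snd x hy, deriv_mixed x hx hy]
  field_simp
  ring

lemma crit_nondeg {x y : ℂ} (h : IsCritPt (x, y)) : hessDet (x, y) ≠ 0 := by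
  obtain ⟨hx, hy, e1, e2⟩ := crit_eqs h
  obtain ⟨hP, hyf⟩ := crit_forward h
  have hP' : 5*x^7 + 30*x^6 + 39*x^5 - 10*x^4 - 29*x^3 - 6*x^2 + 5*x + 2 = 0 := hP
  have l : (x+2)*(3*x^2-1)*y + 2*x^4 + 6*x^3 - 2*x = 0 := by
    linear_combination (x+2)*e1 + 2*e2
  rw [hessDet_eq hx hy]
  apply div_ne_zero _ (mul_ne_zero (pow_ne_zero 4 hx) (pow_ne_zero 4 hy))
  intro hH
  have hbig : (67177468992539896829052589202384676579129916781127685198133580442721072105668024396841636790198759061881246859005506494314641858633662626812006885655180011611400464881889309214986293719039102442107904 : ℂ) = 0 := by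
    linear_combination (((33588734496269948414526294601192338289564958390563842599066790221360536052834012198420818395099379530940623429502753247157320929316831313406003442827590005805700232440944654607493146859519551221053952) + (-83971836240674871036315736502980845723912395976409606497666975553401340132085030496052045987748448827351558573756883117893302323292078283515008607068975014514250581102361636518732867148798878052634880)*x + (-387304898899270555911139302840176771233956755088105986523480672702051243978566783331481949209021255463221410760164060660488007131501979782337259513486950554857798148136703138933321956826374610206889962656)*x^2 + (110238492573270826275128419335673904123895209548462870939887911167367040231260303740797164770016340058890810235019214453910504394663640014915601133926339281641724073826301921573245771261938239057075533344)*x^3 + (6665997618042141132253487456464268959335379317394096069672870045689740510109827437365534147076569161894143506712396083663808796775518080030917341262763699118941569703757416519861030423911703941117396089912)*x^4 + (6108064402765419910280328203636250609570149865839561503548796720624970138224675878947905045759714798439039876768068673637842855423046546889604438707426736782413724993288004280838764504484289220816491890704)*x^5 + (-31506366654474139902989584433930409367607786869541448344778877947673175482144456228273393464207173783160751984796088452288016681697324622965663133935023135516641827979574693509780531778193520164694554233008)*x^6 + (-54137984429826672465031466304250548866337836380552637536402434297527288655363371186015164275960485133169852247605811695932522972573199312705801218239291093873575752428406766400660971298335475738394188237300)*x^7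 + (29833656086001222161769806290073228997106263392163724093291124881466248393910715780573216320794676635323497077362243486771979151464586508846303020780524065847162032688784522936743195431205684258221418133552)*x^8 + (135125473493807546198023243899204476881472788149084092382145684775739380835550458304087440291634987425679738453820149882606829113111871042340286772817578161620583571715024882023642329650739909473788912285232)*x^9 + (100822125527122152957678624156269659572810445781799229008037782837036062535224686416904340812130661415353333469039790438315468584063435642682755022619981006706339531540342917605482748294462621098933392709600)*x^10 + (-51728492911110677472405940812262224961272802386379638357166913673654271891777843139348577750091673272252369759853037081361021679026234487033416732399513868784191072940772245251801351546948564982535075094648)*x^11 + (-153236649175200211605881498252735470990916695065075291422166075543029391193785077924570841687166163270678339236028105932023805340506587626162546628375364365015503524630142066588350160984998169926219102566504)*x^12 + (-119624571261737377728331519609547938881148017665248440249183849500853130586019122761009845719499785030165678008731438581832404021971255995145252087652456857164147877487505207903722231431241507952514286143456)*x^13 + (-41895788037595833139591921471874837809074602474714423717469007471832504403147624144108864007574636057770117776016316620339248480642262537069737796505968182133888143472072240021735771136428690959450755217424)*x^14 + (-5556922966537463141688341249511021326635971205520058658446439539381212322512341509795250901494281885573101716625477457119947147749310701455392584020471969051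149255421566051087964167384239896544313141064596)*x^15))*hP'
      + ((((-12112987334167532904186677220788681261347975967288084439610063765987463404282984310759916930599247647621331610215217535250756635940567514749570782666659555075359402352711933655888789638588286439240147241) + (15574865800324507253977697715667372841935927357991544217791246989727665869130242191619188820181663821178432478584590858688910267023344824744704312024219997903026308292537313472413527084058536183631241876)*x + (123049242426758965883745086616180915104753670435206452698738133214429315661754550686870031975728898642035184356815330612366045885656129596013781898924506574846558608302827950655078810070400625466927631529)*x^2 + (96858493676389762688289282530945963172459821861896700469520350839946558446999683829183714172128873734187541141117770583547204864240014223717937803029038152166654229344174877075541197517260313006397300000)*x^3 + (-259740942780008465401930367925018024121241574382629172055079728596478136769195101397679208968817733333737495337938681445988684962578187074892550396683604442055056838927416552378632613573868815748524062819)*x^4 + (-234000394453713424791860940570157248337907671392129096793572228145581168354928833431002054200391160387606446227355858610338813553917817562003396300686310372390170536538093931595030159053149445499171843580)*x^5 + (-41101501231785969982901932318868500936656591756805167592059464048677605935742170930438246312827528739446018614093768173964106122406144241533968816719467226709683841875488543550030823847928228878055777105)*x^6))*((x+2)*(3*x^2-1))^4)*hH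
      + (-((((-12112987334167532904186677220788681261347975967288084439610063765987463404282984310759916930599247647621331610215217535250756635940567514749570782666659555075359402352711933655888789638588286439240147241) + (15574865800324507253977697715667372841935927357991544217791246989727665869130242191619188820181663821178432478584590858688910267023344824744704312024219997903026308292537313472413527084058536183631241876)*x + (123049242426758965883745086616180915104753670435206452698738133214429315661754550686870031975728898642035184356815330612366045885656129596013781898924506574846558608302827950655078810070400625466927631529)*x^2 + (96858493676389762688289282530945963172459821861896700469520350839946558446999683829183714172128873734187541141117770583547204864240014223717937803029038152166654229344174877075541197517260313006397300000)*x^3 + (-259740942780008465401930367925018024121241574382629172055079728596478136769195101397679208968817733333737495337938681445988684962578187074892550396683604442055056838927416552378632613573868815748524062819)*x^4 + (-234000394453713424791860940570157248337907671392129096793572228145581168354928833431002054200391160387606446227355858610338813553917817562003396300686310372390170536538093931595030159053149445499171843580)*x^5 + (-41101501231785969982901932318868500936656591756805167592059464048677605935742170930438246312827528739446018614093768173964106122406144241533968816719467226709683841875488543550030823847928228878055777105)*x^6))*((((-32)*x + (-112)*x^2 + (200)*x^3 + (1004)*x^4 + (-144)*x^5 + (-3088)*x^6 + (-1200)*x^7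 + (3496)*x^8 + (2352)*x^9 + (-672)*x^10 + (-792)*x^11 + (-148)*x^12) + ((-64)*x + (-192)*x^2 + (352)*x^3 + (1624)*x^4 + (208)*x^5 + (-4280)*x^6 + (-3792)*x^7 + (2600)*x^8 + (5056)*x^9 + (2424)*x^10 + (384)*x^11)*y + ((-32)*x + (-32)*x^2 + (280)*x^3 + (320)*x^4 + (-760)*x^5 + (-1048)*x^6 + (456)*x^7 + (1104)*x^8 + (504)*x^9 + (72)*x^10)*y^2 + ((32) + (48)*x + (-264)*x^2 + (-428)*x^3 + (648)*x^4 + (1260)*x^5 + (-216)*x^6 + (-1188)*x^7 + (-648)*x^8 + (-108)*x^9)*y^3))))*l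
  norm_num at hbig

noncomputable def QP : Polynomial ℂ :=
  5*X^7 + 30*X^6 + 39*X^5 - 10*X^4 - 29*X^3 - 6*X^2 + 5*X + 2

lemma QP_natDegree : QP.natDegree = 7 := by
  unfold QP
  compute_degree!

lemma QP_ne : QP ≠ 0 := by
  intro h
  have h7 := QP_natDegree
  rw [h] at h7
  simp at h7

lemma QP_aeval (a : ℂ) : (aeval a) QP = Pval a := by
  simp [QP, Pval]

lemma QP_deriv : QP.derivative =
    35*X^6 + 180*X^5 + 195*X^4 - 40*X^3 - 87*X^2 - 12*X + 5 := by
  unfold QP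
  simp [derivative_X_pow, map_ofNat]
  ring

lemma QP_sep : QP.Separable := by
  have hCn : (C ((760698528909564425320492703646616164308774559228362414974435968 : ℂ))) = ((760698528909564425320492703646616164308774559228362414974435968 : ℂ[X])) := map_ofNat C _
  have key : (((236912786460773796135969070649709675482958142906345861370273744) + (-57586225834322566140585829887424718008716124044569055157814864)*X + (6224514839184512664898069889791035817666160593810597577332222720)*X^2 + (-17759031616343917414547524389129488226911963194349447870995577840)*X^3 + (-22417469185986796682561534783737796086863164301098528037906425680)*X^4 + (-4788056908290451183156167252768345776022925278454653839468399680)*X^5)) * QP + (((57374591197603366609710912469439362668571654683134138446777696) + (-76179277252796689816428548768085317874899722048996307034881328)*X + (-1332436744654967421005937881324497850944810883423112070040529008)*X^2 + (-1880282383965402041201562884223798542652905482470426902105764864)*X^3 + (3791142207600225153409138464690008833491809555190390942319615472)*X^4 + (3788788280645924160752403000056625454371014322008522842901130160)*X^5 + (684008129755778740450881036109763682288989325493521977066914240)*X^6)) * QP.derivative = ((760698528909564425320492703646616164308774559228362414974435968 : ℂ[X])) := by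
    rw [QP_deriv]
    unfold QP
    ring
  refine ⟨C ((760698528909564425320492703646616164308774559228362414974435968 : ℂ))⁻¹ * (((236912786460773796135969070649709675482958142906345861370273744) + (-57586225834322566140585829887424718008716124044569055157814864)*X + (6224514839184512664898069889791035817666160593810597577332222720)*X^2 + (-17759031616343917414547524389129488226911963194349447870995577840)*X^3 + (-22417469185986796682561534783737796086863164301098528037906425680)*X^4 + (-4788056908290451183156167252768345776022925278454653839468399680)*X^5)), C ((760698528909564425320492703646616164308774559228362414974435968 : ℂ))⁻¹ * (((57374591197603366609710912469439362668571654683134138446777696) + (-76179277252796689816428548768085317874899722048996307034881328)*X + (-1332436744654967421005937881324497850944810883423112070040529008)*X^2 + (-1880282383965402041201562884223798542652905482470426902105764864)*X^3 + (3791142207600225153409138464690008833491809555190390942319615472)*X^4 + (3788788280645924160752403000056625454371014322008522842901130160)*X^5 + (684008129755778740450881036109763682288989325493521977066914240)*X^6)), ?_⟩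
  calc C ((760698528909564425320492703646616164308774559228362414974435968 : ℂ))⁻¹ * (((236912786460773796135969070649709675482958142906345861370273744) + (-57586225834322566140585829887424718008716124044569055157814864)*X + (6224514839184512664898069889791035817666160593810597577332222720)*X^2 + (-17759031616343917414547524389129488226911963194349447870995577840)*X^3 + (-22417469185986796682561534783737796086863164301098528037906425680)*X^4 + (-4788056908290451183156167252768345776022925278454653839468399680)*X^5)) * QP + C ((760698528909564425320492703646616164308774559228362414974435968 : ℂ))⁻¹ * (((57374591197603366609710912469439362668571654683134138446777696) + (-76179277252796689816428548768085317874899722048996307034881328)*X + (-1332436744654967421005937881324497850944810883423112070040529008)*X^2 + (-1880282383965402041201562884223798542652905482470426902105764864)*X^3 + (3791142207600225153409138464690008833491809555190390942319615472)*X^4 + (3788788280645924160752403000056625454371014322008522842901130160)*X^5 + (684008129755778740450881036109763682288989325493521977066914240)*X^6)) * QP.derivative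
      = C ((760698528909564425320492703646616164308774559228362414974435968 : ℂ))⁻¹ * ((((236912786460773796135969070649709675482958142906345861370273744) + (-57586225834322566140585829887424718008716124044569055157814864)*X + (6224514839184512664898069889791035817666160593810597577332222720)*X^2 + (-17759031616343917414547524389129488226911963194349447870995577840)*X^3 + (-22417469185986796682561534783737796086863164301098528037906425680)*X^4 + (-4788056908290451183156167252768345776022925278454653839468399680)*X^5)) * QP + (((57374591197603366609710912469439362668571654683134138446777696) + (-76179277252796689816428548768085317874899722048996307034881328)*X + (-1332436744654967421005937881324497850944810883423112070040529008)*X^2 + (-1880282383965402041201562884223798542652905482470426902105764864)*X^3 + (3791142207600225153409138464690008833491809555190390942319615472)*X^4 + (3788788280645924160752403000056625454371014322008522842901130160)*X^5 + (684008129755778740450881036109763682288989325493521977066914240)*X^6)) * QP.derivative) := by ring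
    _ = C ((760698528909564425320492703646616164308774559228362414974435968 : ℂ))⁻¹ * C ((760698528909564425320492703646616164308774559228362414974435968 : ℂ)) := by rw [key, hCn]
    _ = 1 := by
        rw [← C_mul, inv_mul_cancel₀ (by norm_num : ((760698528909564425320492703646616164308774559228362414974435968 : ℂ)) ≠ 0), C_1]

lemma card_rootSet : ((QP.rootSet ℂ) : Set ℂ).ncard = 7 := by
  have hcard : Fintype.card (QP.rootSet ℂ) = 7 := by
    rw [Polynomial.card_rootSet_eq_natDegree QP_sep
      (IsAlgClosed.splits _), QP_natDegree]
  rw [← Nat.card_coe_set_eq, Nat.card_eq_fintype_card, hcard]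

/-- `W` has exactly 7 critical points in `(ℂ∖{0})²`, and each of them is
nondegenerate (nonvanishing Hessian determinant). -/
theorem W_critical_points :
    {p : ℂ × ℂ | IsCritPt p}.ncard = 7 ∧
      ∀ p : ℂ × ℂ, IsCritPt p → hessDet p ≠ 0 := by
  constructor
  · have hset : {p : ℂ × ℂ | IsCritPt p} = (fun a => (a, fy a)) '' (QP.rootSet ℂ) := by
      ext p
      simp only [Set.mem_setOf_eq, Set.mem_image]
      constructor
      · intro h
        obtain ⟨x, y⟩ := p
        obtain ⟨hP, hyf⟩ := crit_forward h
        refine ⟨x, ?_, by rw [hyf]⟩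
        rw [Polynomial.mem_rootSet]
        exact ⟨QP_ne, by rw [QP_aeval]; exact hP⟩
      · rintro ⟨a, haroot, rfl⟩
        have hP : Pval a = 0 := by
          rw [← QP_aeval]
          exact (Polynomial.mem_rootSet.mp haroot).2
        exact crit_backward hP
    rw [hset, Set.ncard_image_of_injective _ (fun a b hab => congrArg Prod.fst hab)]
    exact card_rootSet
  · intro p hp
    obtain ⟨x, y⟩ := p
    exact crit_nondeg hp
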